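/- If a tree with edge-weight probability distributions at each node has no infinite directed paths (i.e., is well-founded), then the sum over all leaves of their weights equals exactly 1. -/

import Mathlib

open scoped ENNReal
open Classical

/-- The weight of a node: the product of the edge weights along the path from the
root (the empty sequence) to `v`. -/
noncomputable def nodeWeight {A : Type*} (w : List A → A → ℝ) (v : List A) : ℝ :=
  ∏ i : Fin v.length, w (v.take i.1) (v.get i)

/-- `v` is a leaf of the tree `T`. -/
def IsLeaf {A : Type*} (T : Set (List A)) (v : List A) : Prop :=
  v ∈ T ∧ ∀ a : A, v ++ [a] ∉ T

/-- The length-`n` prefix of an infinite branch `b`. -/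
def prefixList {A : Type*} (b : ℕ → A) (n : ℕ) : List A := (List.range n).map b

/-- ENNReal-valued path weight from node `v` along the suffix `s`. -/
noncomputable def pathW {A : Type*} (w : List A → A → ℝ) : List A → List A → ℝ≥0∞
  | _, [] => 1
  | v, a :: s => ENNReal.ofReal (w v a) * pathW w (v ++ [a]) s

lemma pathW_ne_top {A : Type*} (w : List A → A → ℝ) :
    ∀ s v, pathW w v s ≠ ⊤ := by
  intro s
  induction s with
  | nil => intro v; simp [pathW]
  | cons a t ih =>
    intro v
    simp only [pathW]
    exact ENNReal.mul_ne_top ENNReal.ofReal_ne_top (ih (v ++ [a]))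

lemma pathW_eq_prod {A : Type*} (w : List A → A → ℝ) :
    ∀ (s v : List A),
      pathW w v s = ∏ i : Fin s.length, ENNReal.ofReal (w (v ++ s.take i.1) (s.get i)) := by
  intro s
  induction s with
  | nil => intro v; simp [pathW]
  | cons a t ih =>
    intro v
    rw [pathW, ih (v ++ [a])]
    show _ = ∏ i : Fin (t.length + 1),
      ENNReal.ofReal (w (v ++ List.take (↑i) (a :: t)) ((a :: t).get i))
    rw [Fin.prod_univ_succ]
    congr 1
    · simp
    · apply Finset.prod_congr rfl
      intro i _
      congr 1
      simp [List.take_succ_cons, List.append_assoc]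

lemma prefixList_succ {A : Type*} (b : ℕ → A) (n : ℕ) :
    prefixList b (n + 1) = prefixList b n ++ [b n] := by
  simp [prefixList, List.range_succ]

theorem sum_leaf_weights_eq_one_of_wellFounded {A : Type*} [Countable A]
    (T : Set (List A)) (w : List A → A → ℝ)
    (hroot : [] ∈ T)
    (hprefix : ∀ (v : List A) (a : A), v ++ [a] ∈ T → v ∈ T)
    (hnonneg : ∀ (v : List A) (a : A), 0 ≤ w v a)
    (hzero : ∀ (v : List A) (a : A), v ++ [a] ∉ T → w v a = 0)
    (hsum : ∀ v ∈ T, (∃ a : A, v ++ [a] ∈ T) → ∑' a : A, w v a = 1)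
    (hwf : ¬ ∃ b : ℕ → A, ∀ n : ℕ, prefixList b n ∈ T) :
    ∑' v : {v : List A // IsLeaf T v}, nodeWeight w v.1 = 1 := by
  -- prefix closure
  have htake : ∀ v ∈ T, ∀ m : ℕ, v.take m ∈ T := by
    intro v hv
    induction v using List.reverseRecOn with
    | nil => intro m; simpa using hv
    | append_singleton u a ih =>
      intro m
      by_cases hm : m ≤ u.length
      · rw [List.take_append_of_le_length hm]
        exact ih (hprefix u a hv) m
      · have : (u ++ [a]).take m = u ++ [a] := by
          apply List.take_of_length_le
          simp only [List.length_append, List.length_cons, List.length_nil]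
          omega
        rw [this]; exact hv
  have hpre : ∀ p v : List A, p <+: v → v ∈ T → p ∈ T := by
    intro p v hpv hv
    rcases hpv with ⟨t, rfl⟩
    have := htake _ hv p.length
    simpa using this
  -- well-foundedness of the child relation
  set r : List A → List A → Prop := fun x y => (∃ a : A, x = y ++ [a]) ∧ x ∈ T with hr
  have hWF : WellFounded r := by
    by_contra hW
    obtain ⟨a0, ha0⟩ : ∃ x, ¬ Acc r x := by
      by_contra h
      push_neg at h
      exact hW ⟨h⟩
    -- build a descending sequence
    have step : ∀ x : {x : List A // ¬ Acc r x}, ∃ y : {x : List A // ¬ Acc r x}, r y.1 x.1 := by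
      intro x
      obtain ⟨b, hb, hrb⟩ := exists_not_acc_lt_of_not_acc x.2
      exact ⟨⟨b, hb⟩, hrb⟩
    choose g hg using step
    let f : ℕ → {x : List A // ¬ Acc r x} := fun n => g^[n + 1] ⟨a0, ha0⟩
    have hf : ∀ n, r (f (n + 1)).1 (f n).1 := by
      intro n
      have : f (n + 1) = g (f n) := by
        simp only [f, Function.iterate_succ_apply']
      rw [this]; exact hg (f n)
    -- each f n is in T
    have hfT : ∀ n, (f n).1 ∈ T := by
      intro n
      cases n with
      | zero =>
        have := hf 0
        rcases this with ⟨⟨a, ha⟩, hmem⟩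
        exact hprefix _ a (ha ▸ hmem)
      | succ m => exact (hf m).2
    -- lengths
    choose aa haa using fun n => (hf n).1
    have hlen : ∀ n, (f n).1.length = (f 0).1.length + n := by
      intro n
      induction n with
      | zero => rfl
      | succ m ih => rw [haa m] ; simp [ih, Nat.add_assoc]
    set L0 := (f 0).1.length with hL0
    -- branch
    let b : ℕ → A := fun n =>
      if h : n < L0 then (f 0).1.get ⟨n, h⟩ else aa (n - L0)
    have hplen : ∀ (c : ℕ → A) (n : ℕ), (prefixList c n).length = n := by
      intro c n; simp [prefixList]
    have key : ∀ n, prefixList b (L0 + n) = (f n).1 := by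
      intro n
      induction n with
      | zero =>
        rw [Nat.add_zero]
        apply List.ext_get
        · rw [hplen]
        · intro i h1 h2
          simp only [prefixList, List.get_eq_getElem, List.getElem_map, List.getElem_range]
          have hi : i < L0 := by rwa [hplen] at h1
          simp [b, hi]
      | succ m ih =>
        have h1 : L0 + (m + 1) = (L0 + m) + 1 := by ring
        have hb : b (L0 + m) = aa m := by
          have hge : ¬ (L0 + m < L0) := by omega
          have h2 : L0 + m - L0 = m := by omega
          simp only [b, dif_neg hge, h2]
        rw [h1, prefixList_succ, ih, haa m, hb]
    apply hwf
    refine ⟨b, fun n => ?_⟩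
    by_cases hn : n < L0
    · have heq : prefixList b n = (prefixList b L0).take n := by
        apply List.ext_get
        · rw [hplen, List.length_take, hplen]
          omega
        · intro i h1 h2
          simp only [prefixList, List.get_eq_getElem, List.getElem_take, List.getElem_map,
            List.getElem_range]
      have h0 := key 0
      rw [Nat.add_zero] at h0
      rw [heq, h0]
      exact htake _ (hfT 0) n
    · have : n = L0 + (n - L0) := by omega
      rw [this, key]
      exact hfT _
  -- the main inductive claim
  set W : List A → A → ℝ≥0∞ := fun v a => ENNReal.ofReal (w v a) with hWdef
  set G : List A → {v : List A // IsLeaf T v} → ℝ≥0∞ := fun v u =>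
    if v <+: u.1 then pathW w v (u.1.drop v.length) else 0 with hGdef
  have main : ∀ v : List A, v ∈ T → ∑' u : {v : List A // IsLeaf T v}, G v u = 1 := by
    intro v
    induction v using WellFounded.induction hWF with
    | _ v IH =>
    intro hvT
    by_cases hleaf : IsLeaf T v
    · -- leaf case
      rw [tsum_eq_single (⟨v, hleaf⟩ : {v : List A // IsLeaf T v})]
      · simp only [hGdef]
        rw [if_pos (List.prefix_refl v)]
        simp [pathW]
      · intro u hu
        simp only [hGdef]
        by_cases hp : v <+: u.1
        · exfalso
          rcases hp with ⟨t, ht⟩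
          cases t with
          | nil =>
            apply hu
            apply Subtype.ext
            simp [← ht]
          | cons a s =>
            have : v ++ [a] <+: u.1 := ⟨s, by simp [← ht]⟩
            exact hleaf.2 a (hpre _ _ this u.2.1)
        · rw [if_neg hp]
    · -- internal node case
      obtain ⟨a0, ha0⟩ : ∃ a : A, v ++ [a] ∈ T := by
        by_contra h
        push_neg at h
        exact hleaf ⟨hvT, h⟩
      have split : ∀ u : {v : List A // IsLeaf T v},
          G v u = ∑' a : A, W v a * G (v ++ [a]) u := by
        intro u
        by_cases hp : v <+: u.1
        · rcases hp with ⟨t, ht⟩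
          cases t with
          | nil =>
            exfalso
            apply hleaf
            have : u.1 = v := by simp [← ht]
            exact this ▸ u.2
          | cons a s =>
            rw [tsum_eq_single a]
            · have hdrop : u.1.drop v.length = a :: s := by
                rw [← ht, List.drop_left]
              have hdrop' : u.1.drop (v ++ [a]).length = s := by
                have : u.1 = (v ++ [a]) ++ s := by rw [← ht]; simp
                rw [this, List.drop_left]
              have hp1 : v <+: u.1 := ⟨a :: s, ht⟩
              have hp2 : v ++ [a] <+: u.1 := ⟨s, by simp [← ht]⟩
              simp only [hGdef]
              rw [if_pos hp1, if_pos hp2, hdrop, hdrop', pathW]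
            · intro a' ha'
              have : ¬ (v ++ [a'] <+: u.1) := by
                intro hcon
                rcases hcon with ⟨s', hs'⟩
                rw [← ht] at hs'
                simp only [List.append_assoc, List.append_cancel_left_eq,
                  List.singleton_append, List.cons.injEq] at hs'
                exact ha' hs'.1
              simp only [hGdef]
              rw [if_neg this, mul_zero]
        · have : ∀ a : A, W v a * G (v ++ [a]) u = 0 := by
            intro a
            have : ¬ (v ++ [a] <+: u.1) := fun hcon =>
              hp ((List.prefix_append v [a]).trans hcon)
            simp only [hGdef]
            rw [if_neg this, mul_zero]
          simp only [hGdef] at this ⊢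
          rw [if_neg hp]
          symm
          simp only [this]
          exact tsum_zero
      calc ∑' u : {v : List A // IsLeaf T v}, G v u
          = ∑' (u : {v : List A // IsLeaf T v}) (a : A), W v a * G (v ++ [a]) u :=
            tsum_congr split
        _ = ∑' (a : A) (u : {v : List A // IsLeaf T v}), W v a * G (v ++ [a]) u :=
            ENNReal.tsum_comm
        _ = ∑' (a : A), W v a * ∑' u : {v : List A // IsLeaf T v}, G (v ++ [a]) u := by
            apply tsum_congr; intro a; rw [ENNReal.tsum_mul_left]
        _ = ∑' (a : A), W v a := by
            apply tsum_congr
            intro a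
            by_cases haT : v ++ [a] ∈ T
            · rw [IH (v ++ [a]) ⟨⟨a, rfl⟩, haT⟩ haT, mul_one]
            · have hw0 : W v a = 0 := by
                simp only [hWdef]
                rw [hzero v a haT]
                simp
              rw [hw0, zero_mul]
        _ = 1 := by
            have hs1 : ∑' a : A, w v a = 1 := hsum v hvT ⟨a0, ha0⟩
            have hsummable : Summable (w v) := by
              by_contra h
              rw [tsum_eq_zero_of_not_summable h] at hs1
              norm_num at hs1
            simp only [hWdef]
            rw [← ENNReal.ofReal_tsum_of_nonneg (hnonneg v) hsummable, hs1,
              ENNReal.ofReal_one]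
  -- conclude
  have hM := main [] hroot
  have hG : ∀ u : {v : List A // IsLeaf T v},
      G [] u = ENNReal.ofReal (nodeWeight w u.1) := by
    intro u
    simp only [hGdef]
    rw [if_pos (show ([] : List A) <+: u.1 from ⟨u.1, rfl⟩)]
    simp only [List.length_nil, List.drop_zero]
    rw [pathW_eq_prod]
    rw [nodeWeight, ENNReal.ofReal_prod_of_nonneg (fun i _ => hnonneg _ _)]
    apply Finset.prod_congr rfl
    intro i _
    simp
  rw [tsum_congr hG] at hM
  have hnn : ∀ u : {v : List A // IsLeaf T v}, 0 ≤ nodeWeight w u.1 := fun u =>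
    Finset.prod_nonneg fun i _ => hnonneg _ _
  have := ENNReal.tsum_toReal_eq
    (f := fun u : {v : List A // IsLeaf T v} => ENNReal.ofReal (nodeWeight w u.1))
    (fun u => ENNReal.ofReal_ne_top)
  calc ∑' u : {v : List A // IsLeaf T v}, nodeWeight w u.1
      = ∑' u : {v : List A // IsLeaf T v}, (ENNReal.ofReal (nodeWeight w u.1)).toReal :=
        tsum_congr fun u => (ENNReal.toReal_ofReal (hnn u)).symm
    _ = 1 := by rw [← this, hM, ENNReal.toReal_one]
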